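/- arXiv:2602.20847 — 3 statements merged into one kernel-verified Lean document; each statement's English description precedes it below -/
import Mathlib

section
/- Let p be a prime, K a field, and let O_w ⊆ O_u be valuation subrings of K (so O_u is a coarsening of O_w). Suppose the residue field of O_w has characteristic p, while the residue field of O_u has characteristic 0 and is algebraically closed. Then the Frobenius map x ↦ x^p is surjective on O_w/(p). -/
set_option synthInstance.maxHeartbeats 1000000
set_option maxHeartbeats 1000000

universe u

/-- If `O_w ⊆ O_u` are valuation subrings of `K`, the residue field of `O_w`
has characteristic `p`, and the residue field of `O_u` has characteristic `0` and is
algebraically closed, then the Frobenius is surjective on `O_w/(p)`. -/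
theorem frobenius_surjective_of_algclosed_coarsening (p : ℕ) (hp : p.Prime)
    {K : Type u} [Field K] (Ow Ou : ValuationSubring K) (hle : Ow ≤ Ou)
    (hwres : CharP (IsLocalRing.ResidueField Ow) p)
    (hures : CharZero (IsLocalRing.ResidueField Ou))
    (hualg : IsAlgClosed (IsLocalRing.ResidueField Ou)) :
    Function.Surjective (fun x : Ow ⧸ Ideal.span {(p : Ow)} => x ^ p) := by
  classical
  set ι : Ow →+* Ou := Subring.inclusion hle with hι
  set f : Ow →+* IsLocalRing.ResidueField Ou := (IsLocalRing.residue Ou).comp ι with hf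
  -- p is a unit in Ou
  have hpu : IsUnit (p : Ou) := by
    rw [← IsLocalRing.notMem_maximalIdeal]
    intro h
    have h2 : (p : IsLocalRing.ResidueField Ou) = 0 := by
      rw [← map_natCast (IsLocalRing.residue Ou)]
      exact Ideal.Quotient.eq_zero_iff_mem.2 h
    exact (Nat.cast_ne_zero.2 hp.ne_zero) h2
  have hpK : (p : K) ≠ 0 := by
    have h1 : (p : Ou) ≠ 0 := hpu.ne_zero
    intro h
    exact h1 (by ext; push_cast; exact h)
  -- inverse of p in Ou
  have hpinv : (p : K)⁻¹ ∈ Ou := by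
    obtain ⟨v, hv⟩ := hpu
    have : ((v⁻¹ : Ouˣ) : Ou) * (p : Ou) = 1 := by rw [← hv]; exact v.inv_mul
    have hK : (((v⁻¹ : Ouˣ) : Ou) : K) * (p : K) = 1 := by
      have := congrArg (fun a : Ou => (a : K)) this
      push_cast at this ⊢
      exact this
    have : (((v⁻¹ : Ouˣ) : Ou) : K) = (p : K)⁻¹ := eq_inv_of_mul_eq_one_left hK
    rw [← this]; exact Subtype.coe_prop _
  -- Claim A: if f z = 0 then p divides z in Ow
  have hA : ∀ z : Ow, f z = 0 → (p : Ow) ∣ z := by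
    intro z hz
    by_cases hz0 : (z : K) = 0
    · have : z = 0 := Subtype.ext hz0
      rw [this]; exact dvd_zero _
    have hzm : ι z ∈ IsLocalRing.maximalIdeal Ou := Ideal.Quotient.eq_zero_iff_mem.1 hz
    set t : K := (z : K) * (p : K)⁻¹ with hT
    have htu : t ∈ Ou := Ou.toSubring.mul_mem (hle z.2) hpinv
    have htm : (⟨t, htu⟩ : Ou) ∈ IsLocalRing.maximalIdeal Ou := by
      have : (⟨t, htu⟩ : Ou) = ι z * ⟨(p : K)⁻¹, hpinv⟩ := by
        ext
        show t = (ι z : K) * (p : K)⁻¹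
        have hιz : (ι z : K) = (z : K) := rfl
        rw [hιz, hT]
      rw [this]
      exact Ideal.mul_mem_right _ _ hzm
    have htw : t ∈ Ow := by
      rcases Ow.mem_or_inv_mem t with h | h
      · exact h
      · exfalso
        have ht0 : t ≠ 0 := mul_ne_zero hz0 (inv_ne_zero hpK)
        have hinv : t⁻¹ ∈ Ou := hle h
        have : IsUnit (⟨t, htu⟩ : Ou) := by
          refine IsUnit.of_mul_eq_one ⟨t⁻¹, hinv⟩ ?_
          ext; simp [mul_inv_cancel₀ ht0]
        exact (IsLocalRing.notMem_maximalIdeal.2 this) htm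
    refine ⟨⟨t, htw⟩, ?_⟩
    ext
    push_cast
    rw [hT, mul_comm, mul_assoc, inv_mul_cancel₀ hpK, mul_one]
  -- the range of f is "closed under taking c or c⁻¹"
  have hR : ∀ c : IsLocalRing.ResidueField Ou, c ≠ 0 → c ∈ f.range ∨ c⁻¹ ∈ f.range := by
    intro c hc
    obtain ⟨t, ht⟩ := Ideal.Quotient.mk_surjective c
    have ht0 : (t : K) ≠ 0 := by
      intro h
      apply hc
      rw [← ht]
      have : t = 0 := Subtype.ext h
      rw [this]; exact map_zero _
    rcases Ow.mem_or_inv_mem (t : K) with h | h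
    · left
      refine ⟨⟨(t : K), h⟩, ?_⟩
      rw [hf]
      have : ι ⟨(t : K), h⟩ = t := Subtype.ext rfl
      simp only [RingHom.comp_apply, this]
      exact ht
    · right
      refine ⟨⟨(t : K)⁻¹, h⟩, ?_⟩
      have ht' : IsLocalRing.residue Ou t = c := ht
      have hmul : f ⟨(t : K)⁻¹, h⟩ * c = 1 := by
        rw [← ht', hf]
        simp only [RingHom.comp_apply]
        rw [← map_mul]
        have : ι ⟨(t : K)⁻¹, h⟩ * t = 1 := by
          ext
          show ((ι ⟨(t : K)⁻¹, h⟩ : Ou) : K) * (t : K) = 1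
          have hrfl : ((ι ⟨(t : K)⁻¹, h⟩ : Ou) : K) = (t : K)⁻¹ := rfl
          rw [hrfl, inv_mul_cancel₀ ht0]
        rw [this, map_one]
      exact eq_inv_of_mul_eq_one_left hmul
  -- main argument
  intro z
  obtain ⟨x, rfl⟩ := Ideal.Quotient.mk_surjective z
  by_cases hx : (p : Ow) ∣ x
  · refine ⟨0, ?_⟩
    simp only
    rw [zero_pow hp.ne_zero]
    symm
    rw [Ideal.Quotient.eq_zero_iff_mem, Ideal.mem_span_singleton]
    exact hx
  · have hc : f x ≠ 0 := fun h => hx (hA x h)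
    obtain ⟨d, hd⟩ := IsAlgClosed.exists_pow_nat_eq (f x) hp.pos
    have hd0 : d ≠ 0 := by
      intro h
      apply hc
      rw [← hd, h, zero_pow hp.ne_zero]
    have hdR : d ∈ f.range := by
      rcases hR d hd0 with h | h
      · exact h
      · obtain ⟨a, ha⟩ := h
        refine ⟨x * a ^ (p - 1), ?_⟩
        rw [map_mul, map_pow, ha]
        have hp1 : p - 1 + 1 = p := Nat.succ_pred_eq_of_pos hp.pos
        have hdp : d ^ p = d ^ (p - 1) * d := by conv_lhs => rw [← hp1, pow_succ]
        calc f x * d⁻¹ ^ (p - 1) = d ^ p * d⁻¹ ^ (p - 1) := by rw [hd]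
          _ = d ^ (p - 1) * d * d⁻¹ ^ (p - 1) := by rw [hdp]
          _ = d * (d * d⁻¹) ^ (p - 1) := by rw [mul_pow]; ring
          _ = d := by rw [mul_inv_cancel₀ hd0, one_pow, mul_one]
    obtain ⟨y, hy⟩ := hdR
    refine ⟨Ideal.Quotient.mk _ y, ?_⟩
    simp only
    rw [← map_pow, Ideal.Quotient.eq, Ideal.mem_span_singleton]
    exact hA _ (by rw [map_sub, map_pow, hy, hd, sub_self])
end

section
/- Let p be a prime and let K be a field with a valuation v : K → ℝ≥0 such that: v is nontrivial; the valuation ring O_v = {x : v x ≤ 1} is a henselian local ring; the residue field of O_v has characteristic p; the value group v(K^×) is non-discrete (for every γ ∈ v(K^×) with γ < 1 there is δ ∈ v(K^×) with γ < δ < 1); and the Frobenius map x ↦ x^p is surjective on O_v/(p). Then the completion K̂ of K, with its canonical extended valuation v̂ : K̂ → ℝ≥0, is a perfectoid field of residue characteristic p: K̂ is complete, v̂ is nontrivial with non-discrete value group, the residue field of O_{v̂} has characteristic p, and the Frobenius map is surjective on O_{v̂}/(p). -/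
set_option synthInstance.maxHeartbeats 1000000
set_option maxHeartbeats 1000000
set_option maxHeartbeats 0

universe u

/-- A valuation `v : K → ℝ≥0` makes the field `K` a perfectoid field of residue
characteristic `p`: `v` is nontrivial, `K` is complete for the topology induced by `v`,
the value group `v(Kˣ)` is non-discrete, and the Frobenius `x ↦ x ^ p` is surjective on
`O_v/(p)`, where `p` is the characteristic of the residue field of `O_v`. -/
def IsPerfectoid (p : ℕ) (K : Type*) [Field K] (v : Valuation K NNReal) : Prop :=
  (∃ x : Kˣ, v (x : K) ≠ 1) ∧
  (letI : Valued K NNReal := Valued.mk' v; CompleteSpace K) ∧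
  (∀ x : Kˣ, v (x : K) < 1 → ∃ y : Kˣ, v (x : K) < v (y : K) ∧ v (y : K) < 1) ∧
  CharP (IsLocalRing.ResidueField v.valuationSubring) p ∧
  Function.Surjective
    (fun x : v.valuationSubring ⧸ Ideal.span {(p : v.valuationSubring)} => x ^ p)
open UniformSpace Filter Topology

section AuxiliaryLemmas

section Aux
variable {F : Type*} [Field F]

theorem aux_isUnit_iff {v : Valuation F NNReal} {a : v.valuationSubring} :
    IsUnit a ↔ v (a : F) = 1 := by
  constructor
  · rintro ⟨u, rfl⟩
    have h1 : v ((u : v.valuationSubring) : F) ≤ 1 := (u : v.valuationSubring).2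
    have h2 : v (((u⁻¹ : _) : v.valuationSubring) : F) ≤ 1 := ((u⁻¹ : _) : v.valuationSubring).2
    have h0 : ((u : v.valuationSubring) : F) * (((u⁻¹ : _) : v.valuationSubring) : F) = 1 := by
      norm_cast
      exact_mod_cast u.mul_inv
    have h3 : v ((u : v.valuationSubring) : F) * v (((u⁻¹ : _) : v.valuationSubring) : F) = 1 := by
      rw [← Valuation.map_mul, h0, Valuation.map_one]
    refine le_antisymm h1 ?_
    calc (1:NNReal) = _ * _ := h3.symm
    _ ≤ v ((u : v.valuationSubring) : F) * 1 := by gcongr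
    _ = _ := mul_one _
  · intro h
    have ha : (a : F) ≠ 0 := by
      intro h0; rw [h0] at h; simp at h
    refine IsUnit.of_mul_eq_one (a := a) ⟨(a : F)⁻¹, ?_⟩ ?_
    · rw [Valuation.mem_valuationSubring_iff, map_inv₀, h]; simp
    · ext; simp [mul_inv_cancel₀ ha]

noncomputable def auxMap {E : Type*} [Field E] (v : Valuation F NNReal) (w : Valuation E NNReal)
    (g : F →+* E) (h : ∀ a, w (g a) = v a) : v.valuationSubring →+* w.valuationSubring :=
  RingHom.codRestrict (g.comp (Subring.subtype _)) _ (fun a => by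
    rw [Valuation.mem_valuationSubring_iff]
    show w (g (a : F)) ≤ 1
    rw [h]; exact a.2)

theorem auxMap_apply {E : Type*} [Field E] (v : Valuation F NNReal)
    (w : Valuation E NNReal) (g : F →+* E) (h : ∀ a, w (g a) = v a)
    (a : v.valuationSubring) : ((auxMap v w g h a : w.valuationSubring) : E) = g (a : F) := rfl

theorem auxMap_isLocalHom {E : Type*} [Field E] (v : Valuation F NNReal)
    (w : Valuation E NNReal) (g : F →+* E) (h : ∀ a, w (g a) = v a) :
    IsLocalHom (auxMap v w g h) := by
  constructor
  intro a ha
  rw [aux_isUnit_iff] at ha ⊢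
  rw [← h (a : F)]
  exact ha

theorem aux_residue {E : Type*} [Field E] (p : ℕ) (v : Valuation F NNReal)
    (w : Valuation E NNReal) (g : F →+* E) (h : ∀ a, w (g a) = v a)
    (hres : CharP (IsLocalRing.ResidueField v.valuationSubring) p) :
    CharP (IsLocalRing.ResidueField w.valuationSubring) p := by
  haveI := hres
  haveI := auxMap_isLocalHom v w g h
  exact charP_of_injective_ringHom (IsLocalRing.ResidueField.map (auxMap v w g h)).injective p

end Aux

open Filter Topology

theorem aux_unit {R : Type*} [Ring R] [Valued R NNReal]
    (γ : (MonoidWithZeroHom.ValueGroup₀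
      (MonoidWithZeroHom.ofClass (Valued.v : Valuation R NNReal)))ˣ) :
    ∃ γ' : NNReal, 0 < γ' ∧ ∀ z : R, Valued.v.restrict z < γ.1 ↔ Valued.v z < γ' := by
  refine ⟨MonoidWithZeroHom.ValueGroup₀.embedding γ.1, ?_,
    fun z => Valuation.restrict_lt_iff_lt_embedding _⟩
  have h0 : (0 : MonoidWithZeroHom.ValueGroup₀ _) < γ.1 := zero_lt_iff.2 γ.ne_zero
  simpa using MonoidWithZeroHom.ValueGroup₀.embedding_strictMono h0

theorem aux_nhds {K : Type*} [Field K] [Valued K NNReal] (x : K) {γ : NNReal} (hγ : γ ≠ 0) :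
    {y : K | Valued.v (y - x) < γ} ∈ 𝓝 x := by
  by_cases h : ∃ z : K, z ≠ 0 ∧ Valued.v z < γ
  · obtain ⟨z, hz, hzγ⟩ := h
    rw [Valued.mem_nhds]
    refine ⟨Units.mk0 (Valued.v.restrict z) (by simp [hz]), fun y hy => ?_⟩
    simp only [Set.mem_setOf_eq, Units.val_mk0, Valuation.restrict_lt_iff] at hy ⊢
    exact hy.trans hzγ
  · push_neg at h
    have hγ0 : (0 : NNReal) < γ / 2 := half_pos (pos_iff_ne_zero.2 hγ)
    haveI : DiscreteTopology K := Valued.discreteTopology_of_forall_lt hγ0.ne'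
      (fun z hz => lt_of_lt_of_le (NNReal.half_lt_self hγ) (h z ((Valued.v.ne_zero_iff).1 hz)))
    rw [mem_nhds_discrete]
    simpa using pos_iff_ne_zero.2 hγ

theorem aux_frob {F E : Type*} [Field F] [Field E] [Valued E NNReal] [CompleteSpace E]
    (p : ℕ) (hp : p.Prime) (v : Valuation F NNReal) {w : Valuation E NNReal}
    (hwv : (Valued.v : Valuation E NNReal) = w)
    (g : F →+* E) (hg : ∀ a, w (g a) = v a)
    (hdense : ∀ (x : E) {γ : NNReal}, γ ≠ 0 → ∃ a : F, w (x - g a) < γ)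
    (hsp : Function.Surjective
      (fun x : v.valuationSubring ⧸ Ideal.span {(p : v.valuationSubring)} => x ^ p)) :
    Function.Surjective
      (fun x : w.valuationSubring ⧸ Ideal.span {(p : w.valuationSubring)} => x ^ p) := by
  have hp0' : (p : ℕ) ≠ 0 := hp.ne_zero
  intro xq
  obtain ⟨x, rfl⟩ := Ideal.Quotient.mk_surjective xq
  suffices h : ∃ y : w.valuationSubring,
      (Ideal.Quotient.mk (Ideal.span {(p : w.valuationSubring)}) y) ^ p =
      Ideal.Quotient.mk _ x by
    obtain ⟨y, hy⟩ := h
    exact ⟨Ideal.Quotient.mk _ y, hy⟩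
  by_cases hp0 : (p : F) = 0
  · -- equal characteristic p
    haveI : Fact p.Prime := ⟨hp⟩
    haveI hFp : CharP F p := (CharP.charP_iff_prime_eq_zero hp).2 hp0
    haveI hEp : CharP E p := charP_of_injective_ringHom g.injective p
    have hpuO : (p : v.valuationSubring) = 0 := by
      apply Subtype.ext; push_cast; exact hp0
    have hpE : (p : E) = 0 := CharP.cast_eq_zero E p
    -- p-th roots exist in O_v
    have hroot : ∀ a : v.valuationSubring, ∃ b : v.valuationSubring, b ^ p = a := by
      intro a
      obtain ⟨bq, hb⟩ := hsp (Ideal.Quotient.mk _ a)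
      obtain ⟨b, rfl⟩ := Ideal.Quotient.mk_surjective bq
      refine ⟨b, ?_⟩
      simp only at hb
      rw [← map_pow, Ideal.Quotient.mk_eq_mk_iff_sub_mem, hpuO, Ideal.span_singleton_eq_bot.2 rfl,
        Ideal.mem_bot, sub_eq_zero] at hb
      exact hb
    -- approximating sequence
    have hchoice : ∀ n : ℕ, ∃ b : v.valuationSubring,
        w ((x : E) - g (b : F) ^ p) < ((n : NNReal) + 1)⁻¹ ⊓ 1 := by
      intro n
      have hne : (((n : NNReal) + 1)⁻¹ ⊓ 1 : NNReal) ≠ 0 := by positivity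
      obtain ⟨a, ha⟩ := hdense (x : E) hne
      have hau : v a ≤ 1 := by
        rw [← hg]
        calc w (g a) = w ((x : E) - ((x : E) - g a)) := by ring_nf
        _ ≤ max (w (x : E)) (w ((x : E) - g a)) := w.map_sub _ _
        _ ≤ 1 := max_le x.2 (le_trans ha.le (min_le_right _ _))
      obtain ⟨b, hb⟩ := hroot ⟨a, hau⟩
      have hbK : (b : F) ^ p = a := by
        have := congrArg Subtype.val hb
        push_cast at this
        exact this
      exact ⟨b, by rw [← map_pow, hbK]; exact ha⟩
    choose b hb using hchoice
    set s : ℕ → E := fun n => g (b n : F) with hs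
    have hspow : ∀ n, s n ^ p = g ((b n : F) ^ p) := fun n => by rw [map_pow]
    have hcau : CauchySeq s := by
      rw [(Valued.hasBasis_uniformity E NNReal).cauchySeq_iff]
      rintro γ -
      obtain ⟨γ', hγ'0, hγ'⟩ := aux_unit γ
      have hγp : (0 : NNReal) < (γ' : NNReal) ^ p := pow_pos hγ'0 p
      obtain ⟨N, hN⟩ := exists_nat_gt (((γ' : NNReal) ^ p)⁻¹)
      have hNlt : ((N : NNReal) + 1)⁻¹ < (γ' : NNReal) ^ p := by
        rw [← inv_inv ((γ' : NNReal) ^ p)]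
        exact inv_strictAnti₀ (inv_pos.2 hγp) (hN.trans (lt_add_one _))
      refine ⟨N, fun m hm n hn => ?_⟩
      show Valued.v.restrict (s n - s m) < γ.1
      rw [hγ', hwv]
      have key : w (s n - s m) ^ p < (γ' : NNReal) ^ p := by
        have hsub : (s n - s m) ^ p = s n ^ p - s m ^ p := sub_pow_char _ _
        rw [← w.map_pow, hsub]
        have he : s n ^ p - s m ^ p = ((x : E) - s m ^ p) - ((x : E) - s n ^ p) := by ring
        have hbnd : ∀ k, N ≤ k → w ((x : E) - s k ^ p) < ((N : NNReal) + 1)⁻¹ := by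
          intro k hk
          calc w ((x : E) - s k ^ p) < ((k : NNReal) + 1)⁻¹ ⊓ 1 := hb k
          _ ≤ ((k : NNReal) + 1)⁻¹ := min_le_left _ _
          _ ≤ ((N : NNReal) + 1)⁻¹ := by
                have hNk : (N : NNReal) ≤ (k : NNReal) := by exact_mod_cast hk
                gcongr
        rw [he]
        calc w (((x : E) - s m ^ p) - ((x : E) - s n ^ p))
            ≤ max (w ((x : E) - s m ^ p)) (w ((x : E) - s n ^ p)) := w.map_sub _ _
        _ < ((N : NNReal) + 1)⁻¹ := max_lt (hbnd m hm) (hbnd n hn)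
        _ < (γ' : NNReal) ^ p := hNlt
      exact lt_of_pow_lt_pow_left₀ p zero_le' key
    obtain ⟨y0, hy0⟩ := cauchySeq_tendsto_of_complete hcau
    -- the p-th powers tend to x
    have htend : Tendsto (fun n => s n ^ p) atTop (𝓝 (x : E)) := by
      rw [Filter.tendsto_iff_forall_eventually_mem]
      intro U hU
      obtain ⟨γ, hγU⟩ := Valued.mem_nhds.1 hU
      obtain ⟨γ', hγ'0, hγ'⟩ := aux_unit γ
      obtain ⟨N, hN⟩ := exists_nat_gt ((γ' : NNReal)⁻¹)
      have hNlt : ((N : NNReal) + 1)⁻¹ < (γ' : NNReal) := by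
        rw [← inv_inv (γ' : NNReal)]
        exact inv_strictAnti₀ (inv_pos.2 hγ'0) (hN.trans (lt_add_one _))
      refine Filter.eventually_atTop.2 ⟨N, fun n hn => hγU ?_⟩
      show Valued.v.restrict (s n ^ p - (x : E)) < γ.1
      rw [hγ', hwv, Valuation.map_sub_swap]
      calc w ((x : E) - s n ^ p) < ((n : NNReal) + 1)⁻¹ ⊓ 1 := hb n
      _ ≤ ((n : NNReal) + 1)⁻¹ := min_le_left _ _
      _ ≤ ((N : NNReal) + 1)⁻¹ := by
            have hNn : (N : NNReal) ≤ (n : NNReal) := by exact_mod_cast hn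
            gcongr
      _ < (γ' : NNReal) := hNlt
    have hy0p : y0 ^ p = (x : E) := tendsto_nhds_unique (hy0.pow p) htend
    have hy0w : w y0 ≤ 1 := by
      rcases eq_or_ne y0 0 with h0 | h0
      · rw [h0, map_zero]; exact zero_le_one
      · have hwy0 : w y0 ≠ 0 := fun hz => h0 (w.zero_iff.1 hz)
        have hball : {z : E | Valued.v (z - y0) < w y0} ∈ 𝓝 y0 :=
          aux_nhds y0 hwy0
        obtain ⟨n, hn⟩ := (hy0.eventually_mem hball).exists
        simp only [Set.mem_setOf_eq, hwv] at hn
        have hsn : w (s n) = w y0 := by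
          have he : s n = y0 + (s n - y0) := by ring
          rw [he, Valuation.map_add_eq_of_lt_left _ hn]
        rw [← hsn, hs]
        rw [hg]
        exact (b n).2
    refine ⟨⟨y0, hy0w⟩, ?_⟩
    rw [← map_pow]
    congr 1
    exact Subtype.ext hy0p
  · -- mixed characteristic case
    have hpi : v (p : F) ≠ 0 := fun h => hp0 (v.zero_iff.1 h)
    have hpi1 : v (p : F) ≤ 1 := by
      have hcast : ((p : v.valuationSubring) : F) = (p : F) := by push_cast; ring
      rw [← hcast]; exact (p : v.valuationSubring).2
    obtain ⟨a, ha⟩ := hdense (x : E) hpi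
    have haw : w (g a) ≤ 1 := by
      calc w (g a) = w ((x : E) - ((x : E) - g a)) := by ring_nf
      _ ≤ max (w (x : E)) (w ((x : E) - g a)) := w.map_sub _ _
      _ ≤ 1 := max_le x.2 (le_trans ha.le hpi1)
    have haO : v a ≤ 1 := by rwa [hg] at haw
    have hgp : g ((p : ℕ) : F) = ((p : ℕ) : E) := map_natCast g p
    have hwp : w ((p : ℕ) : E) = v ((p : ℕ) : F) := by rw [← hgp, hg]
    have hpE0 : ((p : ℕ) : E) ≠ 0 := by
      intro h; apply hpi; rw [← hwp, h, map_zero]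
    set t : E := ((x : E) - g a) / ((p : ℕ) : E) with ht
    have hxt : (x : E) = g a + ((p : ℕ) : E) * t := by
      rw [ht, mul_div_cancel₀ _ hpE0]; ring
    have htw : w t ≤ 1 := by
      rw [ht, map_div₀, hwp]
      exact le_of_lt ((div_lt_one (lt_of_le_of_ne zero_le' (Ne.symm hpi))).2 ha)
    obtain ⟨bq, hb⟩ := hsp (Ideal.Quotient.mk _ (⟨a, haO⟩ : v.valuationSubring))
    obtain ⟨b, rfl⟩ := Ideal.Quotient.mk_surjective bq
    simp only at hb
    rw [← map_pow, Ideal.Quotient.mk_eq_mk_iff_sub_mem] at hb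
    obtain ⟨c, hc⟩ := Ideal.mem_span_singleton'.1 hb
    refine ⟨auxMap v w g hg b, ?_⟩
    rw [← map_pow, Ideal.Quotient.mk_eq_mk_iff_sub_mem, Ideal.mem_span_singleton']
    refine ⟨auxMap v w g hg c - ⟨t, htw⟩, ?_⟩
    have hcK : (c : F) * ((p : ℕ) : F) = ((b : F)) ^ p - a := by
      have := congrArg Subtype.val hc
      push_cast at this
      exact this
    have hcL : g (c : F) * ((p : ℕ) : E) = g ((b : F)) ^ p - g a := by
      have := congrArg g hcK
      simpa only [map_mul, map_pow, map_sub, hgp] using this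
    apply Subtype.ext
    push_cast
    rw [auxMap_apply, auxMap_apply, hxt]
    linear_combination hcL

section AuxCompletion
variable {F : Type*} [Field F] [Valued F NNReal]

theorem aux_approx (x : Completion F) {γ : NNReal} (hγ : γ ≠ 0) :
    ∃ a : F, Valued.v (x - (a : Completion F)) < γ := by
  have hx : x ∈ closure (Set.range ((↑) : F → Completion F)) := by
    rw [UniformSpace.Completion.denseRange_coe.closure_range]; trivial
  have hnb : {y : Completion F | Valued.v (y - x) < γ} ∈ nhds x :=
    aux_nhds x hγ
  rcases mem_closure_iff_nhds.1 hx _ hnb with ⟨y, hy, a, rfl⟩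
  simp only [Set.mem_setOf_eq] at hy
  exact ⟨a, by rwa [Valuation.map_sub_swap] at hy⟩

theorem aux_exists_val_eq (x : Completion F) (hx : x ≠ 0) :
    ∃ a : F, Valued.v ((a : Completion F)) = Valued.v x := by
  have h0 : Valued.v x ≠ 0 := by
    simpa using hx
  obtain ⟨a, ha⟩ := aux_approx x h0
  refine ⟨a, ?_⟩
  have he : (a : Completion F) = x - (x - (a : Completion F)) := by ring
  rw [he, Valuation.map_sub_eq_of_lt_left _ ha]

end AuxCompletion

/-- If `(K, v)` is a nontrivially valued henselian field of residue
characteristic `p` with non-discrete value group and `O_v/(p)` semiperfect, then the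
completion of `K`, with the canonical extension of `v`, is a perfectoid field of residue
characteristic `p`. -/
theorem completion_isPerfectoid (p : ℕ) (hp : p.Prime) {K : Type u} [Field K]
    (v : Valuation K NNReal)
    (hnt : ∃ x : Kˣ, v (x : K) ≠ 1)
    (hhens : HenselianLocalRing v.valuationSubring)
    (hres : CharP (IsLocalRing.ResidueField v.valuationSubring) p)
    (hnd : ∀ x : Kˣ, v (x : K) < 1 → ∃ y : Kˣ, v (x : K) < v (y : K) ∧ v (y : K) < 1)
    (hsp : Function.Surjective
      (fun x : v.valuationSubring ⧸ Ideal.span {(p : v.valuationSubring)} => x ^ p)) :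
    letI : Valued K NNReal := Valued.mk' v
    IsPerfectoid p (UniformSpace.Completion K) Valued.extensionValuation := by
  letI : Valued K NNReal := Valued.mk' v
  set L := UniformSpace.Completion K with hL
  set w : Valuation L NNReal := Valued.extensionValuation with hwdef
  have hw : ∀ a : K, w (a : L) = v a := fun a => Valued.extensionValuation_apply_coe a
  have hwv : (Valued.v : Valuation L NNReal) = w := rfl
  set j : K →+* L := UniformSpace.Completion.coeRingHom with hj
  have hjapp : ∀ a : K, w (j a) = v a := hw
  have hjw : ∀ a : K, w (j a) = v a := hw
  have hdense : ∀ (x : L) {γ : NNReal}, γ ≠ 0 → ∃ a : K, w (x - j a) < γ :=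
    fun x _ hγ => aux_approx x hγ
  unfold IsPerfectoid
  refine ⟨?_, ?_, ?_, ?_, ?_⟩
  · -- nontrivial
    obtain ⟨x, hx⟩ := hnt
    refine ⟨Units.map j.toMonoidHom x, ?_⟩
    simpa [hjapp] using hx
  · -- complete
    have hu : (Valued.mk' w).toUniformSpace = (inferInstance : UniformSpace L) :=
      UniformSpace.ext
        ((@Valued.hasBasis_uniformity L _ NNReal _ (Valued.mk' w)).eq_of_same_basis
          (Valued.hasBasis_uniformity L NNReal))
    show @CompleteSpace L (Valued.mk' w).toUniformSpace
    rw [hu]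
    exact UniformSpace.Completion.completeSpace K
  · -- nondiscrete
    intro x hx1
    have hx0 : (x : L) ≠ 0 := x.ne_zero
    obtain ⟨a, ha⟩ := aux_exists_val_eq (x : L) hx0
    rw [hwv, hw] at ha
    have ha0 : a ≠ 0 := by
      intro h
      rw [h, map_zero] at ha
      exact hx0 (w.zero_iff.1 ha.symm)
    obtain ⟨y, hy1, hy2⟩ := hnd (Units.mk0 a ha0) (by rw [Units.val_mk0, ha]; exact hx1)
    refine ⟨Units.map j.toMonoidHom y, ?_, ?_⟩
    · simpa [Units.coe_map, hjapp, Units.val_mk0, ha] using hy1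
    · simpa [Units.coe_map, hjapp] using hy2
  · -- residue characteristic
    exact aux_residue p v w j hjw hres
  · -- Frobenius surjectivity
    exact aux_frob p hp v hwv j hjw hdense hsp
end AuxiliaryLemmas
end

section
/- Let K be a field with a nontrivial valuation v : K → ℝ≥0, let K̂ be its completion with extended valuation v̂, and let ϖ ∈ K with 0 < v(ϖ) < 1. Then the ring homomorphism O_v/(ϖ) → O_{v̂}/(ϖ) induced by the inclusion K → K̂ is bijective, where O_v = {x ∈ K : v x ≤ 1}, O_{v̂} = {x ∈ K̂ : v̂ x ≤ 1}, and (ϖ) denotes the principal ideal generated by the image of ϖ in each valuation ring. -/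
set_option synthInstance.maxHeartbeats 2000000
set_option maxHeartbeats 8000000

universe u

lemma aux_mem_span_iff {L : Type*} [Field L] (w : Valuation L NNReal)
    (a b : w.valuationSubring) : a ∈ Ideal.span {b} ↔ w a ≤ w b := by
  rw [Ideal.mem_span_singleton]
  constructor
  · rintro ⟨c, rfl⟩
    push_cast
    rw [map_mul]
    exact mul_le_of_le_one_right' c.2
  · intro h
    by_cases hb : (b : L) = 0
    · have ha : (a : L) = 0 := by
        rw [hb, map_zero, le_zero_iff, Valuation.zero_iff] at h
        exact h
      exact ⟨0, Subtype.ext (by simp [ha])⟩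
    · refine ⟨⟨(a : L) / b, ?_⟩, Subtype.ext ?_⟩
      · rw [Valuation.mem_valuationSubring_iff, map_div₀, div_le_one]
        · exact h
        · exact (pos_iff_ne_zero).mpr (w.ne_zero_iff.mpr hb)
      · push_cast
        field_simp

/-- For a nontrivially valued field `(K, v)` and `ϖ ∈ K` with
`0 < v ϖ < 1`, the ring homomorphism `O_v/(ϖ) → O_v̂/(ϖ)` induced by the inclusion of `K` into
its completion `K̂` is bijective.  Here `v̂` is the canonical extension of `v` to the
completion, `ϖv` and `ϖw` denote `ϖ` viewed as an element of the valuation ring of `K` and of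
`K̂` respectively, and `f` is the ring homomorphism `O_v → O_v̂` induced by the inclusion
`K → K̂`. -/
theorem quotient_valuation_ring_completion_bijective {K : Type u} [Field K]
    (v : Valuation K NNReal) (hnt : ∃ x : Kˣ, v (x : K) ≠ 1)
    (ϖ : K) (h0 : 0 < v ϖ) (h1 : v ϖ < 1) :
    letI : Valued K NNReal := Valued.mk' v
    ∀ vhat : Valuation (UniformSpace.Completion K) NNReal,
      vhat = Valued.extensionValuation →
    ∀ ϖv : v.valuationSubring, (ϖv : K) = ϖ →
    ∀ ϖw : vhat.valuationSubring,
      ((ϖw : UniformSpace.Completion K) = ((ϖ : K) : UniformSpace.Completion K)) →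
    ∀ f : v.valuationSubring →+* vhat.valuationSubring,
      (∀ x : v.valuationSubring,
        ((f x : vhat.valuationSubring) : UniformSpace.Completion K)
          = ((x : K) : UniformSpace.Completion K)) →
    ∀ hle : Ideal.span {ϖv} ≤ (Ideal.span {ϖw}).comap f,
      Function.Bijective (Ideal.quotientMap (Ideal.span {ϖw}) f hle) := by
  letI : Valued K NNReal := Valued.mk' v
  intro vhat hvhat ϖv hϖv ϖw hϖw f hf hle
  subst hvhat
  have hext : ∀ x : K, Valued.extensionValuation ((x : K) : UniformSpace.Completion K) = v x := by
    intro x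
    exact Valued.valuedCompletion_apply x
  have hvw : Valued.extensionValuation (ϖw : UniformSpace.Completion K) = v ϖ := by rw [hϖw]; exact hext ϖ
  constructor
  · apply Ideal.quotientMap_injective' (H := hle)
    intro x hx
    rw [Ideal.mem_comap, aux_mem_span_iff, hf x, hext, hvw] at hx
    rw [aux_mem_span_iff, hϖv]
    exact hx
  · intro z
    obtain ⟨z, rfl⟩ := Ideal.Quotient.mk_surjective z
    -- find x : K close to z
    have h0' : (v ϖ : NNReal) ≠ 0 := h0.ne'
    have hnhds : {y : UniformSpace.Completion K |
        Valued.v (y - (z : UniformSpace.Completion K)) < (Units.mk0 (v ϖ) h0' : NNRealˣ)}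
        ∈ nhds (z : UniformSpace.Completion K) := by
      rw [Valued.mem_nhds]
      refine ⟨Units.mk0 (Valued.v.restrict ((ϖ : K) : UniformSpace.Completion K)) ?_, fun y hy => ?_⟩
      · rw [Ne, Valuation.restrict_eq_zero_iff]
        exact (hext ϖ).trans_ne h0'
      · simp only [Set.mem_setOf_eq, Units.val_mk0] at hy ⊢
        rw [Valuation.restrict_lt_iff] at hy
        exact hy.trans_eq (hext ϖ)
    obtain ⟨x, hx⟩ := UniformSpace.Completion.denseRange_coe.mem_nhds hnhds
    have hx' : Valued.extensionValuation ((x : UniformSpace.Completion K) - (z : UniformSpace.Completion K)) < v ϖ := hx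
    have hxle : v x ≤ 1 := by
      rw [← hext x]
      calc Valued.extensionValuation (x : UniformSpace.Completion K)
          = Valued.extensionValuation (((x : UniformSpace.Completion K) - (z : UniformSpace.Completion K)) + (z : UniformSpace.Completion K)) := by ring_nf
        _ ≤ max (Valued.extensionValuation ((x : UniformSpace.Completion K) - (z : UniformSpace.Completion K))) (Valued.extensionValuation ((z : UniformSpace.Completion K) : UniformSpace.Completion K)) :=
            Valued.extensionValuation.map_add _ _
        _ ≤ 1 := max_le (hx'.le.trans h1.le) z.2
    refine ⟨Ideal.Quotient.mk _ ⟨x, hxle⟩, ?_⟩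
    rw [Ideal.quotientMap_mk, Ideal.Quotient.eq]
    rw [aux_mem_span_iff, hvw]
    have : ((f ⟨x, hxle⟩ - z : (Valued.extensionValuation (K := K) (Γ₀ := NNReal)).valuationSubring) : UniformSpace.Completion K)
        = (x : UniformSpace.Completion K) - (z : UniformSpace.Completion K) := by
      push_cast
      rw [hf ⟨x, hxle⟩]
    rw [this]
    exact hx'.le
end
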